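/- Let β = (∫_0^1 (1−s⁴)^{−1/4} ds)⁴ and R > 0. Define u : [0,R] → ℝ implicitly by F(u(r)) = β^{1/4} r / R, where F(t) = ∫_t^1 (1−s⁴)^{−1/4} ds. Then u is well-defined, continuous, strictly decreasing with u(0) = 1 and u(R) = 0, is C² on (0,R), and satisfies u'(r)² u''(r) + (β/R⁴) u(r)³ = 0 on (0,R). -/

import Mathlib

open MeasureTheory intervalIntegral Set

noncomputable def F (t : ℝ) : ℝ := ∫ s in t..1, (1 - s ^ 4) ^ (-(1:ℝ)/4)

noncomputable def betaConst : ℝ := (∫ s in (0:ℝ)..1, (1 - s ^ 4) ^ (-(1:ℝ)/4)) ^ 4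

noncomputable def gfun : ℝ → ℝ := fun s => (1 - s ^ 4) ^ (-(1:ℝ)/4)

lemma gfun_nonneg {s : ℝ} (hs : s ∈ Set.Icc (0:ℝ) 1) : 0 ≤ gfun s := by
  have : (0:ℝ) ≤ 1 - s ^ 4 := by
    have := pow_le_one₀ hs.1 hs.2 (n := 4); linarith
  exact Real.rpow_nonneg this _

lemma gfun_pos {s : ℝ} (hs : s ∈ Set.Ico (0:ℝ) 1) : 0 < gfun s := by
  have : (0:ℝ) < 1 - s ^ 4 := by
    have := pow_lt_one₀ hs.1 hs.2 (n := 4) (by norm_num); linarith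
  exact Real.rpow_pos_of_pos this _

lemma gfun_int : IntervalIntegrable gfun volume 0 1 := by
  have hmaj : IntervalIntegrable (fun x : ℝ => (1 - x) ^ (-(1:ℝ)/4)) volume 0 1 := by
    have h := (intervalIntegrable_rpow' (a := 0) (b := 1)
      (r := -(1:ℝ)/4) (by norm_num)).comp_sub_left 1
    simpa using h.symm
  refine hmaj.mono_fun ?_ ?_
  · apply Measurable.aestronglyMeasurable
    unfold gfun; fun_prop
  · rw [Set.uIoc_of_le (by norm_num : (0:ℝ) ≤ 1)]
    refine (ae_restrict_mem measurableSet_Ioc).mono fun x hx => ?_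
    have hx0 : 0 ≤ x := le_of_lt hx.1
    have hx1 : x ≤ 1 := hx.2
    have h1 : 0 ≤ 1 - x ^ 4 := by have := pow_le_one₀ hx0 hx1 (n := 4); linarith
    have h2 : 0 ≤ 1 - x := by linarith
    show ‖gfun x‖ ≤ ‖(1 - x) ^ (-(1:ℝ)/4)‖
    rw [Real.norm_of_nonneg (gfun_nonneg ⟨hx0, hx1⟩),
      Real.norm_of_nonneg (Real.rpow_nonneg h2 _)]
    rcases eq_or_lt_of_le hx1 with h | h
    · subst h
      simp [gfun, Real.zero_rpow (by norm_num : -(1:ℝ)/4 ≠ 0)]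
    · have hlt : 0 < 1 - x := by linarith
      have hle : 1 - x ≤ 1 - x ^ 4 := by
        have : x ^ 4 ≤ x := pow_le_of_le_one hx0 hx1 (by norm_num)
        linarith
      exact Real.rpow_le_rpow_of_nonpos hlt hle (by norm_num)

lemma gfun_int' {a b : ℝ} (ha : a ∈ Set.Icc (0:ℝ) 1) (hb : b ∈ Set.Icc (0:ℝ) 1) :
    IntervalIntegrable gfun volume a b :=
  gfun_int.mono_set (by
    rw [Set.uIcc_of_le (by norm_num : (0:ℝ) ≤ 1)]
    exact Set.uIcc_subset_Icc ha hb)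

lemma F_eq (t : ℝ) : F t = ∫ s in t..1, gfun s := rfl

lemma F_one : F 1 = 0 := intervalIntegral.integral_same

lemma F_zero_pos : 0 < F 0 := by
  rw [F_eq]
  exact intervalIntegral_pos_of_pos_on (gfun_int' ⟨le_refl 0, by norm_num⟩ ⟨by norm_num, le_refl 1⟩)
    (fun x hx => gfun_pos ⟨hx.1.le, hx.2⟩) one_pos

lemma betaConst_eq : betaConst = (F 0) ^ 4 := rfl

lemma betaConst_rpow : betaConst ^ ((1:ℝ)/4) = F 0 := by
  rw [betaConst_eq, ← Real.rpow_natCast (F 0) 4, ← Real.rpow_mul F_zero_pos.le]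
  norm_num

lemma F_nonneg {t : ℝ} (ht : t ∈ Set.Icc (0:ℝ) 1) : 0 ≤ F t := by
  rw [F_eq]
  exact intervalIntegral.integral_nonneg ht.2 (fun s hs => gfun_nonneg ⟨le_trans ht.1 hs.1, hs.2⟩)

lemma F_cont : ContinuousOn F (Set.Icc (0:ℝ) 1) := by
  have h : IntegrableOn gfun (Set.uIcc (0:ℝ) 1) volume := by
    rw [Set.uIcc_of_le (by norm_num : (0:ℝ) ≤ 1)]
    rw [← intervalIntegrable_iff_integrableOn_Icc_of_le (by norm_num : (0:ℝ) ≤ 1)]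
    exact gfun_int
  have := continuousOn_primitive_interval_left (a := 0) (b := 1) (μ := volume) h
  rwa [Set.uIcc_of_le (by norm_num : (0:ℝ) ≤ 1)] at this

lemma F_strictAnti : StrictAntiOn F (Set.Icc (0:ℝ) 1) := by
  intro t ht t' ht' hlt
  have hsplit : (∫ s in t..t', gfun s) + ∫ s in t'..1, gfun s = ∫ s in t..1, gfun s :=
    intervalIntegral.integral_add_adjacent_intervals (gfun_int' ht ht')
      (gfun_int' ht' ⟨by norm_num, le_refl 1⟩)
  have hpos : 0 < ∫ s in t..t', gfun s := by
    refine intervalIntegral_pos_of_pos_on (gfun_int' ht ht') (fun x hx => ?_) hlt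
    exact gfun_pos ⟨le_trans ht.1 hx.1.le, lt_of_lt_of_le hx.2 ht'.2⟩
  rw [F_eq, F_eq]
  linarith [hsplit]

lemma F_le_F_zero {t : ℝ} (ht : t ∈ Set.Icc (0:ℝ) 1) : F t ≤ F 0 :=
  F_strictAnti.antitoneOn ⟨le_refl 0, by norm_num⟩ ht ht.1

lemma F_mapsTo : Set.MapsTo F (Set.Icc (0:ℝ) 1) (Set.Icc (0:ℝ) (F 0)) :=
  fun t ht => ⟨F_nonneg ht, F_le_F_zero ht⟩

lemma F_surjOn : Set.SurjOn F (Set.Icc (0:ℝ) 1) (Set.Icc (0:ℝ) (F 0)) := by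
  have := intermediate_value_Icc' (by norm_num : (0:ℝ) ≤ 1) F_cont
  rwa [F_one] at this

noncomputable def Fhat : (Set.Icc (0:ℝ) 1) → (Set.Icc (0:ℝ) (F 0)) :=
  fun x => ⟨F x, F_mapsTo x.2⟩

lemma Fhat_bij : Function.Bijective Fhat := by
  constructor
  · intro x y hxy
    exact Subtype.ext (F_strictAnti.injOn x.2 y.2 (congrArg Subtype.val hxy))
  · intro y
    obtain ⟨t, ht, hFt⟩ := F_surjOn y.2
    exact ⟨⟨t, ht⟩, Subtype.ext hFt⟩

lemma Fhat_cont : Continuous Fhat :=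
  Continuous.subtype_mk (F_cont.restrict) _

noncomputable def Fhomeo : (Set.Icc (0:ℝ) 1) ≃ₜ (Set.Icc (0:ℝ) (F 0)) :=
  Continuous.homeoOfEquivCompactToT2 (f := Equiv.ofBijective Fhat Fhat_bij) Fhat_cont

lemma Fhomeo_apply (x : Set.Icc (0:ℝ) 1) : (Fhomeo x : ℝ) = F x := rfl

lemma F_symm_apply (y : Set.Icc (0:ℝ) (F 0)) : F (Fhomeo.symm y) = y := by
  have := Fhomeo.apply_symm_apply y
  rw [← Fhomeo_apply, this]

noncomputable def uu (R : ℝ) : ℝ → ℝ :=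
  fun r => (Fhomeo.symm (Set.projIcc 0 (F 0) F_zero_pos.le (F 0 * r / R)) : ℝ)

lemma uu_mem (R r : ℝ) : uu R r ∈ Set.Icc (0:ℝ) 1 :=
  (Fhomeo.symm _).2

lemma uu_cont (R : ℝ) : Continuous (uu R) := by
  apply continuous_subtype_val.comp
  apply Fhomeo.symm.continuous.comp
  apply continuous_projIcc.comp
  fun_prop

lemma F_uu {R : ℝ} (hR : 0 < R) {r : ℝ} (hr : r ∈ Set.Icc 0 R) :
    F (uu R r) = F 0 * r / R := by
  have hy : F 0 * r / R ∈ Set.Icc 0 (F 0) := by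
    constructor
    · have h1 := hr.1
      have h2 := F_zero_pos
      positivity
    · rw [div_le_iff₀ hR]
      have := hr.2
      nlinarith [F_zero_pos]
  rw [uu, Set.projIcc_of_mem F_zero_pos.le hy]
  exact F_symm_apply _

lemma uu_strictAnti {R : ℝ} (hR : 0 < R) : StrictAntiOn (uu R) (Set.Icc 0 R) := by
  intro r hr r' hr' hlt
  by_contra hcon
  push_neg at hcon
  have hF : F (uu R r) < F (uu R r') := by
    rw [F_uu hR hr, F_uu hR hr']
    have h0 := F_zero_pos
    apply div_lt_div_of_pos_right ?_ hR
    nlinarith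
  have : F (uu R r') ≤ F (uu R r) :=
    F_strictAnti.antitoneOn (uu_mem R r) (uu_mem R r') hcon
  linarith

lemma uu_zero {R : ℝ} (hR : 0 < R) : uu R 0 = 1 := by
  apply F_strictAnti.injOn (uu_mem R 0) ⟨by norm_num, le_refl 1⟩
  rw [F_uu hR ⟨le_refl 0, hR.le⟩, F_one]
  simp

lemma uu_R {R : ℝ} (hR : 0 < R) : uu R R = 0 := by
  apply F_strictAnti.injOn (uu_mem R R) ⟨le_refl 0, by norm_num⟩
  rw [F_uu hR ⟨hR.le, le_refl R⟩]
  field_simp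

lemma uu_Ioo {R : ℝ} (hR : 0 < R) {r : ℝ} (hr : r ∈ Set.Ioo 0 R) :
    uu R r ∈ Set.Ioo (0:ℝ) 1 := by
  have h1 := (uu_strictAnti hR) ⟨le_refl 0, hR.le⟩ ⟨hr.1.le, hr.2.le⟩ hr.1
  have h2 := (uu_strictAnti hR) ⟨hr.1.le, hr.2.le⟩ ⟨hR.le, le_refl R⟩ hr.2
  rw [uu_zero hR] at h1
  rw [uu_R hR] at h2
  exact ⟨h2, h1⟩

lemma gfun_contAt {t : ℝ} (ht : t ∈ Set.Ioo (0:ℝ) 1) : ContinuousAt gfun t := by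
  have h4 : (0:ℝ) < 1 - t ^ 4 := by
    have := pow_lt_one₀ ht.1.le ht.2 (n := 4) (by norm_num); linarith
  have hinner : ContinuousAt (fun s : ℝ => 1 - s ^ 4) t := by fun_prop
  exact ContinuousAt.rpow_const hinner (Or.inl h4.ne')

lemma F_hasDerivAt {t : ℝ} (ht : t ∈ Set.Ioo (0:ℝ) 1) : HasDerivAt F (-(gfun t)) t := by
  have hmeas := ContinuousAt.stronglyMeasurableAtFilter (μ := volume) isOpen_Ioo
    (fun x hx => gfun_contAt hx) t ht
  exact intervalIntegral.integral_hasDerivAt_left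
    (gfun_int' ⟨ht.1.le, ht.2.le⟩ ⟨by norm_num, le_refl 1⟩) hmeas (gfun_contAt ht)

lemma hasDerivAt_uu {R : ℝ} (hR : 0 < R) {r : ℝ} (hr : r ∈ Set.Ioo 0 R) :
    HasDerivAt (uu R) (-(F 0 / R * (1 - uu R r ^ 4) ^ ((1:ℝ)/4))) r := by
  have hM := F_zero_pos
  have hu := uu_Ioo hR hr
  have hq : (0:ℝ) < 1 - uu R r ^ 4 := by
    have := pow_lt_one₀ hu.1.le hu.2 (n := 4) (by norm_num); linarith
  have hy0 : F 0 * r / R = F 0 * r / R := rfl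
  have hy0mem : F 0 * r / R ∈ Set.Ioo 0 (F 0) := by
    constructor
    · have := hr.1; positivity
    · rw [div_lt_iff₀ hR]; nlinarith [hr.2]
  have hry : R * (F 0 * r / R) / F 0 = r := by field_simp
  -- v is a local right inverse of F
  have hvF : ∀ᶠ y in nhds (F 0 * r / R), F (uu R (R * y / F 0)) = y := by
    filter_upwards [isOpen_Ioo.mem_nhds hy0mem] with y hy
    have hmem : R * y / F 0 ∈ Set.Icc 0 R := by
      constructor
      · have := hy.1; positivity
      · rw [div_le_iff₀ hM]; nlinarith [hy.2]
    rw [F_uu hR hmem]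
    field_simp
  have hFd : HasDerivAt F (-(gfun (uu R r))) (uu R (R * (F 0 * r / R) / F 0)) := by
    rw [hry]; exact F_hasDerivAt hu
  have hne : -(gfun (uu R r)) ≠ 0 := by
    have := gfun_pos ⟨hu.1.le, hu.2⟩; linarith
  have hvcont : ContinuousAt (fun y => uu R (R * y / F 0)) (F 0 * r / R) :=
    (uu_cont R).continuousAt.comp (by fun_prop)
  have hvd : HasDerivAt (fun y => uu R (R * y / F 0)) (-(gfun (uu R r)))⁻¹ (F 0 * r / R) :=
    HasDerivAt.of_local_left_inverse hvcont hFd hne hvF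
  have hlin : HasDerivAt (fun x : ℝ => F 0 * x / R) (F 0 / R) r := by
    simpa using ((hasDerivAt_id r).const_mul (F 0)).div_const R
  have hcomp := HasDerivAt.comp r hvd hlin
  have heq : ((fun y => uu R (R * y / F 0)) ∘ fun x : ℝ => F 0 * x / R) = uu R := by
    funext x
    simp only [Function.comp_apply]
    congr 1
    field_simp
  rw [heq] at hcomp
  refine hcomp.congr_deriv ?_
  have hginv : (gfun (uu R r))⁻¹ = (1 - uu R r ^ 4) ^ ((1:ℝ)/4) := by
    rw [gfun, show (-(1:ℝ)/4) = -((1:ℝ)/4) by norm_num, Real.rpow_neg hq.le, inv_inv]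
  rw [inv_neg, hginv]
  ring

noncomputable def ww (R : ℝ) : ℝ → ℝ :=
  fun x => -(F 0 / R * (1 - uu R x ^ 4) ^ ((1:ℝ)/4))

lemma deriv_uu {R : ℝ} (hR : 0 < R) {r : ℝ} (hr : r ∈ Set.Ioo 0 R) :
    deriv (uu R) r = ww R r := (hasDerivAt_uu hR hr).deriv

lemma uu_q_pos {R : ℝ} (hR : 0 < R) {r : ℝ} (hr : r ∈ Set.Ioo 0 R) :
    (0:ℝ) < 1 - uu R r ^ 4 := by
  have hu := uu_Ioo hR hr
  have := pow_lt_one₀ hu.1.le hu.2 (n := 4) (by norm_num); linarith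

lemma ww_cont {R : ℝ} (hR : 0 < R) : ContinuousOn (ww R) (Set.Ioo 0 R) := by
  apply ContinuousOn.neg
  apply ContinuousOn.mul continuousOn_const
  apply ContinuousOn.rpow_const
  · exact (continuousOn_const.sub (((uu_cont R).continuousOn).pow 4))
  · exact fun r hr => Or.inl (uu_q_pos hR hr).ne'

lemma uu_diffOn {R : ℝ} (hR : 0 < R) : DifferentiableOn ℝ (uu R) (Set.Ioo 0 R) :=
  fun r hr => ((hasDerivAt_uu hR hr).differentiableAt).differentiableWithinAt

lemma uu_C1 {R : ℝ} (hR : 0 < R) : ContDiffOn ℝ 1 (uu R) (Set.Ioo 0 R) := by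
  rw [show ((1 : WithTop ℕ∞)) = 0 + 1 by norm_num,
    contDiffOn_succ_iff_deriv_of_isOpen isOpen_Ioo]
  refine ⟨uu_diffOn hR, by simp, ?_⟩
  rw [contDiffOn_zero]
  exact (ww_cont hR).congr (fun r hr => deriv_uu hR hr)

lemma phi_C1 {R : ℝ} : ContDiffOn ℝ 1
    (fun t : ℝ => -(F 0 / R * (1 - t ^ 4) ^ ((1:ℝ)/4))) (Set.Ioo 0 1) := by
  intro t ht
  have hq : (0:ℝ) < 1 - t ^ 4 := by
    have := pow_lt_one₀ ht.1.le ht.2 (n := 4) (by norm_num); linarith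
  have h1 : ContDiffAt ℝ 1 (fun t : ℝ => 1 - t ^ 4) t := by fun_prop
  have h2 : ContDiffAt ℝ 1 (fun x : ℝ => x ^ ((1:ℝ)/4)) (1 - t ^ 4) :=
    Real.contDiffAt_rpow_const_of_ne hq.ne'
  exact (((h2.comp t h1).const_smul (F 0 / R)).neg.contDiffWithinAt).congr
    (fun x _ => by simp [smul_eq_mul]) (by simp [smul_eq_mul])

lemma ww_C1 {R : ℝ} (hR : 0 < R) : ContDiffOn ℝ 1 (ww R) (Set.Ioo 0 R) :=
  phi_C1.comp (uu_C1 hR) (fun r hr => uu_Ioo hR hr)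

lemma uu_C2 {R : ℝ} (hR : 0 < R) : ContDiffOn ℝ 2 (uu R) (Set.Ioo 0 R) := by
  rw [show ((2 : WithTop ℕ∞)) = 1 + 1 by norm_num,
    contDiffOn_succ_iff_deriv_of_isOpen isOpen_Ioo]
  refine ⟨uu_diffOn hR, by simp, ?_⟩
  exact (ww_C1 hR).congr (fun r hr => deriv_uu hR hr)

lemma hasDerivAt_ww {R : ℝ} (hR : 0 < R) {r : ℝ} (hr : r ∈ Set.Ioo 0 R) :
    HasDerivAt (ww R)
      (-(F 0 / R * ((-(4 * uu R r ^ 3 * ww R r)) * ((1:ℝ)/4) *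
        (1 - uu R r ^ 4) ^ ((1:ℝ)/4 - 1)))) r := by
  have hu := hasDerivAt_uu hR hr
  have hq := uu_q_pos hR hr
  have hpow : HasDerivAt (fun x => uu R x ^ 4) (4 * uu R r ^ 3 * ww R r) r := by
    have := hu.pow 4
    refine HasDerivAt.congr_deriv (f := fun x => uu R x ^ 4) this ?_
    simp only [ww]; norm_num
  have hsub : HasDerivAt (fun x => 1 - uu R x ^ 4) (-(4 * uu R r ^ 3 * ww R r)) r :=
    hpow.const_sub 1
  have hrpow := hsub.rpow_const (p := (1:ℝ)/4) (Or.inl hq.ne')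
  exact (hrpow.const_mul (F 0 / R)).neg

theorem stmt19 (R : ℝ) (hR : 0 < R) :
    ∃ u : ℝ → ℝ,
      (∀ r ∈ Set.Icc (0:ℝ) R, u r ∈ Set.Icc (0:ℝ) 1 ∧
        F (u r) = betaConst ^ ((1:ℝ)/4) * r / R) ∧
      ContinuousOn u (Set.Icc 0 R) ∧
      StrictAntiOn u (Set.Icc 0 R) ∧
      u 0 = 1 ∧ u R = 0 ∧
      ContDiffOn ℝ 2 u (Set.Ioo 0 R) ∧
      ∀ r ∈ Set.Ioo (0:ℝ) R,
        (deriv u r) ^ 2 * deriv (deriv u) r + (betaConst / R ^ 4) * u r ^ 3 = 0 := by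
  refine ⟨uu R, ?_, (uu_cont R).continuousOn, uu_strictAnti hR, uu_zero hR, uu_R hR,
    uu_C2 hR, ?_⟩
  · intro r hr
    exact ⟨uu_mem R r, by rw [F_uu hR hr, betaConst_rpow]⟩
  · intro r hr
    have hq := uu_q_pos hR hr
    have hd1 : deriv (uu R) r = ww R r := deriv_uu hR hr
    have hd2 : deriv (deriv (uu R)) r =
        -(F 0 / R * ((-(4 * uu R r ^ 3 * ww R r)) * ((1:ℝ)/4) *
          (1 - uu R r ^ 4) ^ ((1:ℝ)/4 - 1))) := by
      have hev : deriv (uu R) =ᶠ[nhds r] ww R := by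
        filter_upwards [isOpen_Ioo.mem_nhds hr] with x hx
        exact deriv_uu hR hx
      rw [hev.deriv_eq]
      exact (hasDerivAt_ww hR hr).deriv
    have hww : ww R r = -(F 0 / R * (1 - uu R r ^ 4) ^ ((1:ℝ)/4)) := rfl
    rw [hd1, hd2, hww, betaConst_eq]
    have hdiv : F 0 ^ 4 / R ^ 4 = (F 0 / R) ^ 4 := (div_pow _ _ _).symm
    rw [hdiv]
    have key : (((1 - uu R r ^ 4) ^ ((1:ℝ)/4)) ^ 2) *
        ((1 - uu R r ^ 4) ^ ((1:ℝ)/4) * (1 - uu R r ^ 4) ^ ((1:ℝ)/4 - 1)) = 1 := by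
      rw [← Real.rpow_natCast ((1 - uu R r ^ 4) ^ ((1:ℝ)/4)) 2, ← Real.rpow_mul hq.le,
        ← Real.rpow_add hq, ← Real.rpow_add hq]
      norm_num
    linear_combination (-((F 0 / R) ^ 4 * uu R r ^ 3)) * key
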